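/- Let K ⊆ ℝ be a subfield and f ∈ K[X] irreducible of odd prime degree with at least two real roots and at least one nonreal root. Then f is not solvable by radicals over K. -/

import Mathlib

open Polynomial

/-- `F'` is a simple radical extension of `F` of prime exponent. -/
def IsSimpleRadicalExt (F F' : Subfield ℂ) : Prop :=
  ∃ (α : ℂ) (q : ℕ), q.Prime ∧ α ^ q ∈ F ∧ F' = Subfield.closure (↑F ∪ {α})

/-- `L` is a radical extension of `K`: there is a finite tower of simple radical
extensions from `K` to `L`. -/
def IsRadicalExt (K L : Subfield ℂ) : Prop :=
  ∃ (n : ℕ) (c : Fin (n + 1) → Subfield ℂ), c 0 = K ∧ c (Fin.last n) = L ∧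
    ∀ i : Fin n, IsSimpleRadicalExt (c i.castSucc) (c i.succ)

open MulAction commutatorElement in
private lemma aux_fix_two {G X : Type*} [Group G] [Finite X] [MulAction G X]
    [IsPretransitive G X] (hsolv : IsSolvable G)
    (hfaith : ∀ σ : G, (∀ x : X, σ • x = x) → σ = 1)
    {p : ℕ} (hp : p.Prime) (hcard : Nat.card X = p)
    {g : G} {a b : X} (hab : a ≠ b) (hga : g • a = a) (hgb : g • b = b) : g = 1 := by
  classical
  haveI : Fact p.Prime := ⟨hp⟩
  have hex : ∃ k, derivedSeries G k = ⊥ := hsolv.solvable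
  have hbot : derivedSeries G (Nat.find hex) = ⊥ := Nat.find_spec hex
  rcases hn : Nat.find hex with _ | m
  · rw [hn, derivedSeries_zero] at hbot
    exact Subgroup.mem_bot.mp (hbot ▸ Subgroup.mem_top g)
  set N := derivedSeries G m with hN
  haveI hNnormal : N.Normal := derivedSeries_normal G m
  have hNne : N ≠ ⊥ := Nat.find_min hex (by omega)
  rw [hn] at hbot
  have hNcomm : ∀ x ∈ N, ∀ y ∈ N, x * y = y * x := by
    intro x hx y hy
    have hmem : ⁅x, y⁆ ∈ (⊥ : Subgroup G) := by
      rw [← hbot, derivedSeries_succ]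
      exact Subgroup.commutator_mem_commutator hx hy
    have := Subgroup.mem_bot.mp hmem
    rwa [commutatorElement_eq_one_iff_mul_comm] at this
  obtain ⟨⟨u, huN⟩, hu1⟩ := Subgroup.ne_bot_iff_exists_ne_one.mp hNne
  have hu1' : u ≠ 1 := by simpa [Subtype.ext_iff] using hu1
  obtain ⟨x0, hx0⟩ : ∃ x : X, u • x ≠ x := by
    by_contra h; push_neg at h; exact hu1' (hfaith u h)
  have hblock := IsBlock.orbit_of_normal (G := G) (N := N) x0
  have hne : (orbit N x0).Nonempty := ⟨x0, mem_orbit_self x0⟩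
  have hdvd := hblock.ncard_dvd_card hne
  rw [hcard] at hdvd
  have hcard_orbit : (orbit N x0).ncard = p := by
    rcases hp.eq_one_or_self_of_dvd _ hdvd with h1 | h1
    · exfalso
      obtain ⟨c, hc⟩ := Set.ncard_eq_one.mp h1
      have hx0mem : x0 ∈ orbit N x0 := mem_orbit_self x0
      have hux0 : u • x0 ∈ orbit N x0 := ⟨⟨u, huN⟩, rfl⟩
      rw [hc, Set.mem_singleton_iff] at hx0mem hux0
      exact hx0 (hux0.trans hx0mem.symm)
    · exact h1
  have horb : orbit N x0 = Set.univ := by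
    apply Set.eq_of_subset_of_ncard_le (Set.subset_univ _)
    rw [Set.ncard_univ, hcard, hcard_orbit]
  have hNtrans : ∀ y z : X, ∃ n, n ∈ N ∧ n • y = z := by
    intro y z
    have hy : y ∈ orbit N x0 := horb ▸ Set.mem_univ y
    have hz : z ∈ orbit N x0 := horb ▸ Set.mem_univ z
    obtain ⟨⟨n1, hn1⟩, hy'⟩ := hy
    obtain ⟨⟨n2, hn2⟩, hz'⟩ := hz
    refine ⟨n2 * n1⁻¹, mul_mem hn2 (inv_mem hn1), ?_⟩
    have hy'' : n1 • x0 = y := hy'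
    have hz'' : n2 • x0 = z := hz'
    rw [mul_smul, ← hy'', inv_smul_smul, hz'']
  have hfree : ∀ n, n ∈ N → ∀ x : X, n • x = x → n = 1 := by
    intro n hn x hx
    apply hfaith
    intro y
    obtain ⟨m', hm', hmy⟩ := hNtrans x y
    rw [← hmy, ← mul_smul, hNcomm n hn m' hm', mul_smul, hx]
  have hinj : ∀ n₁, n₁ ∈ N → ∀ n₂, n₂ ∈ N → n₁ • a = n₂ • a → n₁ = n₂ := by
    intro n₁ h₁ n₂ h₂ h
    have h3 : (n₂⁻¹ * n₁) • a = a := by rw [mul_smul, h, inv_smul_smul]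
    have h4 := hfree _ (mul_mem (inv_mem h₂) h₁) a h3
    rwa [inv_mul_eq_one, eq_comm] at h4
  have hNbij : Function.Bijective (fun n : N => (n : G) • a) := by
    constructor
    · intro n₁ n₂ h
      exact Subtype.ext (hinj _ n₁.2 _ n₂.2 h)
    · intro y
      obtain ⟨n, hn, hny⟩ := hNtrans a y
      exact ⟨⟨n, hn⟩, hny⟩
  have hcardN : Nat.card N = p := by
    rw [Nat.card_eq_of_bijective _ hNbij, hcard]
  obtain ⟨m0, hm0N, hm0⟩ := hNtrans a b
  have hm0ne : m0 ≠ 1 := by rintro rfl; rw [one_smul] at hm0; exact hab hm0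
  have hconj : g * m0 * g⁻¹ = m0 := by
    apply hinj _ (hNnormal.conj_mem m0 hm0N g) _ hm0N
    have hga' : g⁻¹ • a = a := by rw [inv_smul_eq_iff, hga]
    rw [mul_smul, mul_smul, hga', hm0, hgb]
  have hcomm : Commute g m0 := by
    have : g * m0 = m0 * g := by
      calc g * m0 = (g * m0 * g⁻¹) * g := by group
      _ = m0 * g := by rw [hconj]
    exact this
  apply hfaith
  intro x
  obtain ⟨n, hn, hnx⟩ := hNtrans a x
  have hmem : (⟨n, hn⟩ : N) ∈ Subgroup.zpowers (⟨m0, hm0N⟩ : N) :=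
    mem_zpowers_of_prime_card hcardN (by simpa [Subtype.ext_iff] using hm0ne)
  obtain ⟨j, hj⟩ := Subgroup.mem_zpowers_iff.mp hmem
  have hj' : m0 ^ j = n := by
    have := congrArg (Subtype.val) hj
    simpa using this
  have hcg : Commute g n := hj' ▸ hcomm.zpow_right j
  rw [← hnx, ← mul_smul, hcg.eq, mul_smul, hga]

/-- Let `K` be a subfield of the reals (viewed inside `ℂ`) and `f ∈ K[X]` irreducible
of odd prime degree with at least two real roots and at least one nonreal root. Then
`f` is not solvable by radicals over `K`. -/
theorem not_solvable_by_radicals (K : Subfield ℂ) (hKreal : ∀ x ∈ K, x.im = 0)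
    (f : K[X]) (p : ℕ) (hp : p.Prime) (hodd : Odd p) (hdeg : f.natDegree = p)
    (hirr : Irreducible f)
    (htwo : ∃ z w : ℂ, z ∈ f.rootSet ℂ ∧ w ∈ f.rootSet ℂ ∧ z ≠ w ∧
      z.im = 0 ∧ w.im = 0)
    (hnonreal : ∃ z ∈ f.rootSet ℂ, z.im ≠ 0) :
    ¬ ∃ L : Subfield ℂ, IsRadicalExt K L ∧ ∀ z ∈ f.rootSet ℂ, z ∈ L := by
  rintro ⟨L, ⟨n, c, hc0, hclast, hstep⟩, hroots⟩
  haveI : Fact ((f.map (algebraMap K ℂ)).Splits) := ⟨IsAlgClosed.splits _⟩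
  haveI : CharZero K := (algebraMap K ℂ).charZero
  haveI : NoZeroSMulDivisors K ℂ :=
    inferInstance
  -- every element of L is solvable by radicals
  have hsolvL : ∀ i : Fin (n + 1), ∀ x ∈ c i, x ∈ solvableByRad K ℂ := by
    intro i
    induction i using Fin.induction with
    | zero =>
      intro x hx
      rw [hc0] at hx
      exact (solvableByRad K ℂ).algebraMap_mem ⟨x, hx⟩
    | succ i ih =>
      obtain ⟨α, q, hq, hαq, hcl⟩ := hstep i
      have hα : α ∈ solvableByRad K ℂ :=
        solvableByRad.rad_mem hq.ne_zero (ih _ hαq)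
      have hle : Subfield.closure (↑(c i.castSucc) ∪ {α}) ≤
          (solvableByRad K ℂ).toSubfield := by
        apply Subfield.closure_le.mpr
        apply Set.union_subset
        · intro x hx
          exact ih x hx
        · intro x hx
          rw [Set.mem_singleton_iff] at hx
          subst hx
          exact hα
      intro x hx
      rw [hcl] at hx
      exact hle hx
  -- all roots are solvable by radicals
  have hrootsolv : ∀ z ∈ f.rootSet ℂ, z ∈ solvableByRad K ℂ := by
    intro z hz
    exact hsolvL (Fin.last n) z (hclast ▸ hroots z hz)
  obtain ⟨z, w, hz, hw, hzw, hzim, hwim⟩ := htwo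
  obtain ⟨v, hv, hvim⟩ := hnonreal
  -- Gal f is solvable
  have hGal : IsSolvable f.Gal :=
    isSolvable_gal_of_irreducible (hrootsolv z hz) hirr (mem_rootSet.mp hz).2
  haveI := Polynomial.Gal.galAction_isPretransitive f ℂ hirr
  -- card of root set
  have hcard : Nat.card (f.rootSet ℂ) = p := by
    rw [Nat.card_eq_fintype_card, card_rootSet_eq_natDegree hirr.separable
      (IsAlgClosed.splits _), hdeg]
  -- faithfulness
  have hfaith : ∀ σ : f.Gal, (∀ x : f.rootSet ℂ, σ • x = x) → σ = 1 := by
    intro σ hσ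
    apply Polynomial.Gal.galActionHom_injective f ℂ
    rw [map_one]
    ext x
    exact congrArg Subtype.val (hσ x)
  -- complex conjugation as an element of Gal
  have hconjK : ∀ x : K, (starRingEnd ℂ) (algebraMap K ℂ x) = algebraMap K ℂ x := by
    intro x
    exact Complex.conj_eq_iff_im.mpr (hKreal x.1 x.2)
  let ρ : ℂ ≃ₐ[K] ℂ := AlgEquiv.ofRingEquiv (f := starRingAut) hconjK
  let g : f.Gal := Polynomial.Gal.restrict f ℂ ρ
  have key : ∀ (u : ℂ) (hu : u ∈ f.rootSet ℂ),
      (g • (⟨u, hu⟩ : f.rootSet ℂ)).1 = (starRingEnd ℂ) u := by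
    intro u hu
    exact Polynomial.Gal.restrict_smul ρ ⟨u, hu⟩
  have hga : g • (⟨z, hz⟩ : f.rootSet ℂ) = ⟨z, hz⟩ := by
    apply Subtype.ext
    rw [key z hz]
    exact Complex.conj_eq_iff_im.mpr hzim
  have hgb : g • (⟨w, hw⟩ : f.rootSet ℂ) = ⟨w, hw⟩ := by
    apply Subtype.ext
    rw [key w hw]
    exact Complex.conj_eq_iff_im.mpr hwim
  have hab : (⟨z, hz⟩ : f.rootSet ℂ) ≠ ⟨w, hw⟩ := by
    intro h
    exact hzw (congrArg Subtype.val h)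
  have hg1 : g = 1 := aux_fix_two hGal hfaith hp hcard hab hga hgb
  have : (g • (⟨v, hv⟩ : f.rootSet ℂ)).1 = v := by rw [hg1, one_smul]
  rw [key v hv] at this
  exact hvim (Complex.conj_eq_iff_im.mp this)
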